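/- Let p > 3 be a prime and let m be an integer with 0 ≤ m < (p-1)/2, m ≥ 1. Then ∑_{j=1}^{(p-1)/2} (1/j)·C(2j, j+m) ≡ (1/m)·(1 - 3·[3 ∣ p+m]) (mod p), where the sum and the inverse of j and m are taken in Z/pZ and [A] equals 1 if assertion A holds and 0 otherwise. -/

import Mathlib

open Finset

private lemma pascal2 (n r : ℕ) :
    (n + 2).choose (r + 2) = n.choose r + 2 * n.choose (r + 1) + n.choose (r + 2) := by
  rw [show n + 2 = (n + 1) + 1 from rfl, show r + 2 = (r + 1) + 1 from rfl,
    Nat.choose_succ_succ, Nat.choose_succ_succ, Nat.choose_succ_succ]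
  ring

private lemma keyA (k m : ℕ) :
    ((k : ℤ) + 1) * (2 * k + 1).choose (k + m) =
      (m : ℤ) * (2 * k + 2).choose (k + 1 + m) + ((k : ℤ) + 1) * (2 * k + 1).choose (k + m + 1) := by
  have hpas : (2 * k + 2).choose (k + 1 + m) =
      (2 * k + 1).choose (k + m) + (2 * k + 1).choose (k + m + 1) := by
    rw [show 2 * k + 2 = (2 * k + 1) + 1 from rfl, show k + 1 + m = (k + m) + 1 by ring,
      Nat.choose_succ_succ]
  rcases le_or_gt m (k + 1) with h | h
  · have h2 : (2 * k + 1).choose (k + m + 1) * ((k + m) + 1) =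
        (2 * k + 1).choose (k + m) * ((2 * k + 1) - (k + m)) :=
      Nat.choose_succ_right_eq (2 * k + 1) (k + m)
    have h3 : 2 * k + 1 - (k + m) = k + 1 - m := by omega
    rw [h3] at h2
    have h2' : ((2 * k + 1).choose (k + m + 1) : ℤ) * ((k : ℤ) + m + 1) =
        ((2 * k + 1).choose (k + m) : ℤ) * ((k : ℤ) + 1 - m) := by
      have := congrArg (Nat.cast : ℕ → ℤ) h2
      push_cast [Nat.cast_sub (by omega : m ≤ k + 1)] at this
      linarith [this]
    rw [hpas]
    push_cast
    linear_combination -h2'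
  · have hA : (2 * k + 1).choose (k + m) = 0 := Nat.choose_eq_zero_of_lt (by omega)
    have hB : (2 * k + 1).choose (k + m + 1) = 0 := Nat.choose_eq_zero_of_lt (by omega)
    have hC : (2 * k + 2).choose (k + 1 + m) = 0 := Nat.choose_eq_zero_of_lt (by omega)
    simp [hA, hB, hC]

theorem stmt2 (p : ℕ) (hp : p.Prime) (hp3 : 3 < p) (m : ℕ) (hm1 : 1 ≤ m)
    (hm : m < (p - 1) / 2) :
    ∑ j ∈ Finset.Icc 1 ((p - 1) / 2), (j : ZMod p)⁻¹ * Nat.choose (2 * j) (j + m) =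
      (m : ZMod p)⁻¹ * (1 - 3 * (if 3 ∣ p + m then 1 else 0)) := by
  haveI : Fact p.Prime := ⟨hp⟩
  obtain ⟨m', rfl⟩ : ∃ m', m = m' + 1 := ⟨m - 1, by omega⟩
  set N := (p - 1) / 2 with hN
  have hpodd : p % 2 = 1 := Nat.odd_iff.mp (hp.odd_of_ne_two (by omega))
  have hpN : p = 2 * N + 1 := by omega
  have hmN : m' + 1 < N := hm
  -- Q a k = C(2k+1, k+1+a) in ZMod p
  set Q : ℕ → ℕ → ZMod p := fun a k => ((2 * k + 1).choose (k + 1 + a) : ZMod p) with hQ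
  have Qzero : ∀ a k : ℕ, k < a → Q a k = 0 := by
    intro a k h
    simp only [hQ]
    rw [Nat.choose_eq_zero_of_lt (by omega)]
    simp
  have Qpascal : ∀ a k : ℕ, Q (a + 1) (k + 1) = Q a k + 2 * Q (a + 1) k + Q (a + 2) k := by
    intro a k
    simp only [hQ]
    have h1 : 2 * (k + 1) + 1 = (2 * k + 1) + 2 := by ring
    have h2 : (k + 1) + 1 + (a + 1) = (k + 1 + a) + 2 := by ring
    rw [h1, h2, pascal2]
    push_cast
    ring_nf
  have QNval : ∀ c : ℕ, 1 ≤ c → Q c N = if c = N then 1 else 0 := by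
    intro c hc
    simp only [hQ]
    rw [show 2 * N + 1 = p from hpN.symm]
    by_cases hcN : c = N
    · subst hcN
      rw [if_pos rfl, show N + 1 + N = p by omega, Nat.choose_self]
      norm_num
    · rw [if_neg hcN]
      rcases Nat.lt_or_ge (N + 1 + c) p with hlt | hge
      · exact (ZMod.natCast_eq_zero_iff _ _).mpr
          (hp.dvd_choose_self (by omega) hlt)
      · have : p < N + 1 + c := by omega
        rw [Nat.choose_eq_zero_of_lt this]
        simp
  -- Step 1: reindex
  rw [← Finset.Ico_add_one_right_eq_Icc, Finset.sum_Ico_eq_sum_range]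
  rw [show N + 1 - 1 = N from by omega]
  -- Step 2: per-term identity
  have hm0 : ((m' + 1 : ℕ) : ZMod p) ≠ 0 := by
    rw [Ne, ZMod.natCast_eq_zero_iff]
    intro hdvd
    have := Nat.le_of_dvd (by omega) hdvd
    omega
  have step2 : ∀ k ∈ Finset.range N,
      (((1 + k : ℕ) : ZMod p))⁻¹ * ((2 * (1 + k)).choose ((1 + k) + (m' + 1)) : ZMod p) =
        ((m' + 1 : ℕ) : ZMod p)⁻¹ * (Q m' k - Q (m' + 1) k) := by
    intro k hk
    rw [Finset.mem_range] at hk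
    have hj0 : ((1 + k : ℕ) : ZMod p) ≠ 0 := by
      rw [Ne, ZMod.natCast_eq_zero_iff]
      intro hdvd
      have := Nat.le_of_dvd (by omega) hdvd
      omega
    have hj0' : ((k : ZMod p) + 1) ≠ 0 := by
      intro h
      apply hj0
      push_cast
      rw [add_comm]
      exact h
    have hkey : (((k : ZMod p)) + 1) * ((2 * k + 1).choose (k + (m' + 1)) : ZMod p) =
        ((m' + 1 : ℕ) : ZMod p) * ((2 * k + 2).choose (k + 1 + (m' + 1)) : ZMod p) +
          (((k : ZMod p)) + 1) * ((2 * k + 1).choose (k + (m' + 1) + 1) : ZMod p) := by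
      have := congrArg (Int.cast : ℤ → ZMod p) (keyA k (m' + 1))
      push_cast at this ⊢
      exact this
    have hQ1 : Q m' k = ((2 * k + 1).choose (k + (m' + 1)) : ZMod p) := by
      simp only [hQ]
      rw [show k + 1 + m' = k + (m' + 1) from by omega]
    have hQ2 : Q (m' + 1) k = ((2 * k + 1).choose (k + (m' + 1) + 1) : ZMod p) := by
      simp only [hQ]
      rw [show k + 1 + (m' + 1) = k + (m' + 1) + 1 from by omega]
    rw [hQ1, hQ2, show 2 * (1 + k) = 2 * k + 2 from by ring, show (1 + k) + (m' + 1) = k + 1 + (m' + 1) from by ring]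
    have hj : ((1 + k : ℕ) : ZMod p) = (k : ZMod p) + 1 := by push_cast; ring
    rw [hj, inv_mul_eq_div, inv_mul_eq_div, div_eq_div_iff hj0' hm0]
    linear_combination -hkey
  rw [Finset.sum_congr rfl step2, ← Finset.mul_sum]
  congr 1
  -- Step 3: main sum evaluation
  -- telescoping in t
  have ht : ∀ b : ℕ, ∀ k, k < N →
      Q b k = ∑ t ∈ Finset.range N, (Q (b + 3 * t) k - Q (b + 3 * t + 3) k) := by
    intro b k hk
    have h0 := Finset.sum_range_sub' (fun t => Q (b + 3 * t) k) N
    beta_reduce at h0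
    have hcongr : ∀ t ∈ Finset.range N,
        Q (b + 3 * t) k - Q (b + 3 * (t + 1)) k = Q (b + 3 * t) k - Q (b + 3 * t + 3) k := by
      intro t _
      rw [show b + 3 * (t + 1) = b + 3 * t + 3 from by ring]
    rw [Finset.sum_congr rfl hcongr] at h0
    rw [h0, show b + 3 * 0 = b from by ring, Qzero (b + 3 * N) k (by omega), sub_zero]
  have htk : ∀ b : ℕ, ∑ k ∈ Finset.range N, (Q b k - Q (b + 3) k) =
      Q (b + 1) N - Q (b + 2) N := by
    intro b
    have h0 := Finset.sum_range_sub (fun k => Q (b + 1) k - Q (b + 2) k) N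
    beta_reduce at h0
    have hcongr : ∀ k ∈ Finset.range N,
        (Q (b + 1) (k + 1) - Q (b + 2) (k + 1)) - (Q (b + 1) k - Q (b + 2) k) =
          Q b k - Q (b + 3) k := by
      intro k _
      rw [Qpascal b k, show b + 2 = (b + 1) + 1 from rfl, Qpascal (b + 1) k]
      ring
    rw [← Finset.sum_congr rfl hcongr, h0]
    rw [Qzero (b + 1) 0 (by omega), Qzero (b + 2) 0 (by omega)]
    ring
  calc ∑ k ∈ Finset.range N, (Q m' k - Q (m' + 1) k)
      = ∑ k ∈ Finset.range N, ∑ t ∈ Finset.range N,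
          ((Q (m' + 3 * t) k - Q (m' + 3 * t + 3) k) -
            (Q (m' + 1 + 3 * t) k - Q (m' + 1 + 3 * t + 3) k)) := by
        refine Finset.sum_congr rfl ?_
        intro k hk
        rw [Finset.mem_range] at hk
        rw [ht m' k hk, ht (m' + 1) k hk, ← Finset.sum_sub_distrib]
    _ = ∑ t ∈ Finset.range N,
          ((Q (m' + 3 * t + 1) N - Q (m' + 3 * t + 2) N) -
            (Q (m' + 1 + 3 * t + 1) N - Q (m' + 1 + 3 * t + 2) N)) := by
        rw [Finset.sum_comm]
        refine Finset.sum_congr rfl ?_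
        intro t _
        rw [Finset.sum_sub_distrib, htk (m' + 3 * t), htk (m' + 1 + 3 * t)]
    _ = 1 - 3 * (if 3 ∣ p + (m' + 1) then 1 else 0) := by
        have hval : ∀ t ∈ Finset.range N,
            ((Q (m' + 3 * t + 1) N - Q (m' + 3 * t + 2) N) -
              (Q (m' + 1 + 3 * t + 1) N - Q (m' + 1 + 3 * t + 2) N)) =
            ((if m' + 3 * t + 1 = N then (1 : ZMod p) else 0) -
              (if m' + 3 * t + 2 = N then 1 else 0)) -
            ((if m' + 3 * t + 2 = N then 1 else 0) -
              (if m' + 3 * t + 3 = N then 1 else 0)) := by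
          intro t _
          rw [show m' + 1 + 3 * t + 1 = m' + 3 * t + 2 from by ring,
            show m' + 1 + 3 * t + 2 = m' + 3 * t + 3 from by ring,
            QNval (m' + 3 * t + 1) (by omega), QNval (m' + 3 * t + 2) (by omega),
            QNval (m' + 3 * t + 3) (by omega)]
        rw [Finset.sum_congr rfl hval]
        obtain ⟨s, hs⟩ : ∃ s, N = m' + 2 + s := ⟨N - m' - 2, by omega⟩
        have hsmod := Nat.mod_lt s (show 0 < 3 by norm_num)
        obtain ⟨u, hu⟩ : ∃ u, s = 3 * u + s % 3 := ⟨s / 3, by omega⟩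
        interval_cases h : s % 3
        · -- s = 3u : middle condition at t = u, total -2, and 3 ∣ p + m
          have hsum : ∀ t ∈ Finset.range N,
              ((if m' + 3 * t + 1 = N then (1 : ZMod p) else 0) -
                (if m' + 3 * t + 2 = N then 1 else 0)) -
              ((if m' + 3 * t + 2 = N then 1 else 0) -
                (if m' + 3 * t + 3 = N then 1 else 0)) =
              if t = u then (-2 : ZMod p) else 0 := by
            intro t _
            by_cases htu : t = u
            · subst htu
              rw [if_pos rfl, if_neg (by omega), if_pos (by omega), if_neg (by omega)]
              ring
            · rw [if_neg htu, if_neg (by omega), if_neg (by omega), if_neg (by omega)]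
              ring
          rw [Finset.sum_congr rfl hsum, Finset.sum_ite_eq' (Finset.range N) u fun _ => (-2 : ZMod p)]
          rw [if_pos (Finset.mem_range.mpr (by omega)), if_pos (by omega)]
          ring
        · -- s = 3u+1 : third condition at t = u, total 1, 3 ∤ p + m
          have hsum : ∀ t ∈ Finset.range N,
              ((if m' + 3 * t + 1 = N then (1 : ZMod p) else 0) -
                (if m' + 3 * t + 2 = N then 1 else 0)) -
              ((if m' + 3 * t + 2 = N then 1 else 0) -
                (if m' + 3 * t + 3 = N then 1 else 0)) =
              if t = u then (1 : ZMod p) else 0 := by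
            intro t _
            by_cases htu : t = u
            · subst htu
              rw [if_pos rfl, if_neg (by omega), if_neg (by omega), if_pos (by omega)]
              ring
            · rw [if_neg htu, if_neg (by omega), if_neg (by omega), if_neg (by omega)]
              ring
          rw [Finset.sum_congr rfl hsum, Finset.sum_ite_eq' (Finset.range N) u fun _ => (1 : ZMod p)]
          rw [if_pos (Finset.mem_range.mpr (by omega)), if_neg (by omega)]
          ring
        · -- s = 3u+2 : first condition at t = u+1, total 1, 3 ∤ p + m
          have hsum : ∀ t ∈ Finset.range N,
              ((if m' + 3 * t + 1 = N then (1 : ZMod p) else 0) -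
                (if m' + 3 * t + 2 = N then 1 else 0)) -
              ((if m' + 3 * t + 2 = N then 1 else 0) -
                (if m' + 3 * t + 3 = N then 1 else 0)) =
              if t = u + 1 then (1 : ZMod p) else 0 := by
            intro t _
            by_cases htu : t = u + 1
            · subst htu
              rw [if_pos rfl, if_pos (by omega), if_neg (by omega), if_neg (by omega)]
              ring
            · rw [if_neg htu, if_neg (by omega), if_neg (by omega), if_neg (by omega)]
              ring
          rw [Finset.sum_congr rfl hsum,
            Finset.sum_ite_eq' (Finset.range N) (u + 1) fun _ => (1 : ZMod p)]
          rw [if_pos (Finset.mem_range.mpr (by omega)), if_neg (by omega)]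
          ring
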